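/- Let G = Q₈ and let C_{s,t} = ⟨η_{s,t}⟩ where η_{s,t} is the 8-cycle (1, s, t, (st)⁻¹, s², s⁻¹, t⁻¹, st), for distinct s, t ∈ {σ, τ, στ}, with G acting by conjugation via λ. Then there exists a G-equivariant group isomorphism C_{s,t} → C_{s′,t′} if and only if t = t′. -/

import Mathlib

set_option maxRecDepth 40000

abbrev G : Type := QuaternionGroup 2
def σ : G := QuaternionGroup.a 1
def τ : G := QuaternionGroup.xa 0
def lam (g : G) : Equiv.Perm G := Equiv.mulLeft g
def rho (g : G) : Equiv.Perm G := Equiv.mulRight g⁻¹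
def Est (s t : G) : Subgroup (Equiv.Perm G) :=
  Subgroup.closure {lam s * rho t, lam (s^2), lam t * rho (s*t)}
def Ast (s t : G) : Subgroup (Equiv.Perm G) :=
  Subgroup.closure {lam s, rho t}
def eta (s t : G) : Equiv.Perm G :=
  List.formPerm [1, s, t, (s*t)⁻¹, s^2, s⁻¹, t⁻¹, s*t]
def Cst (s t : G) : Subgroup (Equiv.Perm G) :=
  Subgroup.closure {eta s t}
def Dsl (s t : G) : Subgroup (Equiv.Perm G) :=
  Subgroup.closure {lam s, lam t * rho s}
def Dsr (s t : G) : Subgroup (Equiv.Perm G) :=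
  Subgroup.closure {rho s, lam s * rho t}
def lamG : Subgroup (Equiv.Perm G) := Subgroup.closure (Set.range lam)
def rhoG : Subgroup (Equiv.Perm G) := Subgroup.closure (Set.range rho)
/-- `f` is `G`-equivariant for the conjugation action of `G` via `lam`. -/
def Equivariant {N₁ N₂ : Subgroup (Equiv.Perm G)} (f : N₁ ≃* N₂) : Prop :=
  ∀ (g : G) (η : Equiv.Perm G) (hη : η ∈ N₁) (hη' : lam g * η * (lam g)⁻¹ ∈ N₁),
    (f ⟨lam g * η * (lam g)⁻¹, hη'⟩ : Equiv.Perm G)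
      = lam g * (f ⟨η, hη⟩ : Equiv.Perm G) * (lam g)⁻¹

/-! ### Auxiliary material -/

/-- The exponent by which conjugation by `lam g` acts on `eta s t`. -/
def e (g t : G) : ℕ := if g = 1 ∨ g = t ∨ g = t^2 ∨ g = t^3 then 1 else 3

theorem master1 : ∀ s t : G, ((s = σ ∨ s = τ ∨ s = σ*τ) ∧ (t = σ ∨ t = τ ∨ t = σ*τ) ∧ s ≠ t) →
    (eta s t)^(2^3) = 1 ∧ ¬ (eta s t)^(2^2) = 1 := by decide

theorem master2 : ∀ g s t : G, ((s = σ ∨ s = τ ∨ s = σ*τ) ∧ (t = σ ∨ t = τ ∨ t = σ*τ) ∧ s ≠ t) →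
    lam g * eta s t * (lam g)⁻¹ = (eta s t)^(e g t) := by decide

theorem master3 : ∀ t t' : G, (t = σ ∨ t = τ ∨ t = σ*τ) → (t' = σ ∨ t' = τ ∨ t' = σ*τ) → t ≠ t' →
    e t' t = 3 := by decide

theorem e_self (t : G) : e t t = 1 := by simp [e]

theorem ord8 {s t : G} (h : (s = σ ∨ s = τ ∨ s = σ*τ) ∧ (t = σ ∨ t = τ ∨ t = σ*τ) ∧ s ≠ t) :
    orderOf (eta s t) = 8 :=
  orderOf_eq_prime_pow (p := 2) (n := 2) (master1 s t h).2 (master1 s t h).1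

theorem cst_eq (s t : G) : Cst s t = Subgroup.zpowers (eta s t) :=
  (Subgroup.zpowers_eq_closure _).symm

/-- A multiplicative version of `zpowersEquivZPowers`. -/
noncomputable def powEquiv {x y : Equiv.Perm G} (h : orderOf x = orderOf y) :
    ↥(Subgroup.zpowers x) ≃* ↥(Subgroup.zpowers y) where
  toEquiv := zpowersEquivZPowers h
  map_mul' a b := by
    obtain ⟨i, hi⟩ := Submonoid.mem_powers_iff _ _ |>.mp (mem_powers_iff_mem_zpowers.mpr a.2)
    obtain ⟨j, hj⟩ := Submonoid.mem_powers_iff _ _ |>.mp (mem_powers_iff_mem_zpowers.mpr b.2)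
    have ha : a = ⟨x ^ i, i, zpow_natCast x i⟩ := Subtype.ext hi.symm
    have hb : b = ⟨x ^ j, j, zpow_natCast x j⟩ := Subtype.ext hj.symm
    subst ha hb
    have hab : ((⟨x ^ i, i, zpow_natCast x i⟩ : Subgroup.zpowers x) *
        (⟨x ^ j, j, zpow_natCast x j⟩ : Subgroup.zpowers x))
        = (⟨x ^ (i + j), i + j, zpow_natCast x (i + j)⟩ : Subgroup.zpowers x) :=
      Subtype.ext (pow_add x i j).symm
    show zpowersEquivZPowers h _ = zpowersEquivZPowers h _ * zpowersEquivZPowers h _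
    rw [hab, zpowersEquivZPowers_apply, zpowersEquivZPowers_apply, zpowersEquivZPowers_apply]
    exact Subtype.ext (pow_add y i j)

theorem powEquiv_apply {x y : Equiv.Perm G} (h : orderOf x = orderOf y) (n : ℕ)
    (hm : x ^ n ∈ Subgroup.zpowers x) :
    ((powEquiv h ⟨x ^ n, hm⟩ : ↥(Subgroup.zpowers y)) : Equiv.Perm G) = y ^ n := by
  have h0 : (⟨x ^ n, hm⟩ : ↥(Subgroup.zpowers x)) = ⟨x ^ n, n, zpow_natCast x n⟩ := rfl
  rw [h0]
  show ((zpowersEquivZPowers h ⟨x ^ n, n, zpow_natCast x n⟩ : ↥(Subgroup.zpowers y)) :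
    Equiv.Perm G) = y ^ n
  rw [zpowersEquivZPowers_apply]

theorem powEquiv_gen {x y : Equiv.Perm G} (h : orderOf x = orderOf y) :
    ((powEquiv h ⟨x, Subgroup.mem_zpowers x⟩ : ↥(Subgroup.zpowers y)) : Equiv.Perm G) = y := by
  have h1 : (⟨x, Subgroup.mem_zpowers x⟩ : ↥(Subgroup.zpowers x))
      = ⟨x ^ 1, pow_mem (Subgroup.mem_zpowers x) 1⟩ := Subtype.ext (pow_one x).symm
  rw [h1, powEquiv_apply h 1, pow_one]

theorem powEquiv_zpow {x y : Equiv.Perm G} (h : orderOf x = orderOf y) (m : ℤ)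
    (hm : x ^ m ∈ Subgroup.zpowers x) :
    ((powEquiv h ⟨x ^ m, hm⟩ : ↥(Subgroup.zpowers y)) : Equiv.Perm G) = y ^ m := by
  have h1 : (⟨x ^ m, hm⟩ : ↥(Subgroup.zpowers x))
      = (⟨x, Subgroup.mem_zpowers x⟩ : ↥(Subgroup.zpowers x)) ^ m := Subtype.ext (by push_cast; rfl)
  rw [h1, map_zpow]
  push_cast
  rw [powEquiv_gen]

theorem stmt12 (s t s' t' : G)
    (hs : s ∈ ({σ, τ, σ * τ} : Set G)) (ht : t ∈ ({σ, τ, σ * τ} : Set G))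
    (hs' : s' ∈ ({σ, τ, σ * τ} : Set G)) (ht' : t' ∈ ({σ, τ, σ * τ} : Set G))
    (hst : s ≠ t) (hst' : s' ≠ t') :
    (∃ f : ↥(Cst s t) ≃* ↥(Cst s' t'), Equivariant f) ↔ t = t' := by
  simp only [Set.mem_insert_iff, Set.mem_singleton_iff] at hs ht hs' ht'
  have hgood : (s = σ ∨ s = τ ∨ s = σ*τ) ∧ (t = σ ∨ t = τ ∨ t = σ*τ) ∧ s ≠ t := ⟨hs, ht, hst⟩
  have hgood' : (s' = σ ∨ s' = τ ∨ s' = σ*τ) ∧ (t' = σ ∨ t' = τ ∨ t' = σ*τ) ∧ s' ≠ t' :=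
    ⟨hs', ht', hst'⟩
  set x := eta s t with hx
  set y := eta s' t' with hy
  have hxmem : x ∈ Cst s t := Subgroup.subset_closure rfl
  constructor
  · rintro ⟨f, hf⟩
    by_contra htt'
    have h3 : e t' t = 3 := master3 t t' ht ht' htt'
    have hconj : lam t' * x * (lam t')⁻¹ = x ^ (3 : ℕ) := by
      rw [master2 t' s t hgood, h3]
    have hmemconj : lam t' * x * (lam t')⁻¹ ∈ Cst s t := by
      rw [hconj]; exact pow_mem hxmem 3
    have heq := hf t' x hxmem hmemconj
    set x0 : ↥(Cst s t) := (⟨x, hxmem⟩ : ↥(Cst s t)) with hx0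
    have hLHS : (⟨lam t' * x * (lam t')⁻¹, hmemconj⟩ : ↥(Cst s t)) = x0 ^ (3 : ℕ) :=
      Subtype.ext (by push_cast; exact hconj)
    rw [hLHS, map_pow] at heq
    obtain ⟨m, hm⟩ := Subgroup.mem_closure_singleton.mp (f x0).2
    have hconj' : lam t' * ((f x0 : Equiv.Perm G)) * (lam t')⁻¹ = (f x0 : Equiv.Perm G) := by
      rw [← hm, ← conj_zpow, master2 t' s' t' hgood', e_self, pow_one]
    rw [hconj'] at heq
    push_cast at heq
    have h31 : (f x0) ^ (3 : ℕ) = f x0 := Subtype.ext heq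
    have h2 : x0 ^ (2 : ℕ) = 1 := by
      apply f.injective
      rw [map_pow, map_one]
      calc (f x0) ^ (2:ℕ) = (f x0) ^ (3:ℕ) * (f x0)⁻¹ := by group
      _ = f x0 * (f x0)⁻¹ := by rw [h31]
      _ = 1 := by group
    have hx2 : x ^ (2 : ℕ) = 1 := by
      have := congrArg (Subtype.val) h2
      push_cast at this
      exact this
    exact (master1 s t hgood).2 (by rw [show (2^2 : ℕ) = 2*2 from rfl, pow_mul, hx2, one_pow])
  · rintro rfl
    have h8 : orderOf x = orderOf y := by rw [hx, hy, ord8 hgood, ord8 hgood']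
    refine ⟨(MulEquiv.subgroupCongr (cst_eq s t)).trans ((powEquiv h8).trans
      (MulEquiv.subgroupCongr (cst_eq s' t).symm)), ?_⟩
    intro g η hη hη'
    obtain ⟨n, hn⟩ := Subgroup.mem_closure_singleton.mp hη
    have key : ∀ (m : ℤ) (hm : x ^ m ∈ Cst s t),
        (((MulEquiv.subgroupCongr (cst_eq s t)).trans ((powEquiv h8).trans
          (MulEquiv.subgroupCongr (cst_eq s' t).symm)) ⟨x ^ m, hm⟩ : ↥(Cst s' t)) :
          Equiv.Perm G) = y ^ m := by
      intro m hm
      have hm' : x ^ m ∈ Subgroup.zpowers x := (cst_eq s t) ▸ hm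
      have e1 : MulEquiv.subgroupCongr (cst_eq s t) ⟨x ^ m, hm⟩
          = (⟨x ^ m, hm'⟩ : ↥(Subgroup.zpowers x)) := Subtype.ext rfl
      rw [MulEquiv.trans_apply, MulEquiv.trans_apply, e1, MulEquiv.subgroupCongr_apply,
        powEquiv_zpow]
    subst hn
    have hconj : lam g * x ^ n * (lam g)⁻¹ = x ^ ((e g t : ℤ) * n) := by
      rw [← conj_zpow, master2 g s t hgood, ← zpow_natCast x (e g t), ← zpow_mul]
    have hconj' : lam g * y ^ n * (lam g)⁻¹ = y ^ ((e g t : ℤ) * n) := by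
      rw [← conj_zpow, master2 g s' t hgood', ← zpow_natCast y (e g t), ← zpow_mul]
    have h1 : (⟨lam g * x ^ n * (lam g)⁻¹, hη'⟩ : ↥(Cst s t))
        = ⟨x ^ ((e g t : ℤ) * n), hconj ▸ hη'⟩ := Subtype.ext hconj
    rw [h1, key _ _, key _ _, hconj']
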